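/- For every s ∈ [0,1] the identity λ·∑_{j=0}^∞ φ_j s^j − s^i = ∑_{k=1}^{c−1} s^{k−1} B_k(s) φ_k + B_c(s)·∑_{j=c}^∞ φ_j s^{j−1} holds, all series involved converging absolutely. -/

import Mathlib

open Set Filter Topology

/-- The generating function `B_i(s) = ∑_{j≥0} b_j s^j + (i-1) b_0 (1-s)`. -/
noncomputable def Bi (b : ℕ → ℝ) (i : ℕ) (s : ℝ) : ℝ :=
  (∑' j : ℕ, b j * s ^ j) + ((i : ℝ) - 1) * b 0 * (1 - s)

set_option maxHeartbeats 1000000 in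
theorem stmt9 (c : ℕ) (hc : 1 ≤ c) (b : ℕ → ℝ)
    (hbnn : ∀ j : ℕ, j ≠ 1 → 0 ≤ b j) (hb0 : 0 < b 0)
    (hbsum : Summable b) (hbzero : (∑' j : ℕ, b j) = 0)
    (hb2 : 0 < ∑' j : ℕ, b (j + 2))
    (lam : ℝ) (hlam : 0 < lam) (i : ℕ) (φ : ℕ → ℝ)
    (hφnn : ∀ j : ℕ, 0 ≤ φ j) (hφsum : Summable φ)
    (heq0 : -lam * φ 0 + b 0 * φ 1 = -(if i = 0 then (1 : ℝ) else 0))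
    (heqmid : ∀ j : ℕ, 1 ≤ j → j ≤ c - 1 →
      (∑ k ∈ Finset.Icc 1 (j - 1), b (j - k + 1) * φ k) +
        (b 1 - ((j : ℝ) - 1) * b 0 - lam) * φ j + ((j : ℝ) + 1) * b 0 * φ (j + 1) =
          -(if i = j then (1 : ℝ) else 0))
    (heqtail : ∀ j : ℕ, c ≤ j →
      (∑ k ∈ Finset.Icc 1 (j - 1), b (j - k + 1) * φ k) +
        (b 1 - ((c : ℝ) - 1) * b 0 - lam) * φ j + (c : ℝ) * b 0 * φ (j + 1) =
          -(if i = j then (1 : ℝ) else 0)) :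
    ∀ s ∈ Set.Icc (0 : ℝ) 1,
      Summable (fun j : ℕ => φ j * s ^ j) ∧
      Summable (fun j : ℕ => φ (j + c) * s ^ (j + c - 1)) ∧
      lam * (∑' j : ℕ, φ j * s ^ j) - s ^ i =
        (∑ k ∈ Finset.Icc 1 (c - 1), s ^ (k - 1) * Bi b k s * φ k) +
          Bi b c s * ∑' j : ℕ, φ (j + c) * s ^ (j + c - 1) := by
  intro s hs
  obtain ⟨hs0, hs1⟩ := hs
  have hspow : ∀ n : ℕ, 0 ≤ s ^ n := fun n => pow_nonneg hs0 n
  have hspow1 : ∀ n : ℕ, s ^ n ≤ 1 := fun n => pow_le_one₀ hs0 hs1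
  have hφ1 : Summable (fun k : ℕ => φ (k + 1)) := (summable_nat_add_iff 1).2 hφsum
  have hφc : Summable (fun k : ℕ => φ (k + c)) := (summable_nat_add_iff c).2 hφsum
  have hΦ : Summable (fun j : ℕ => φ j * s ^ j) :=
    Summable.of_nonneg_of_le (fun j => mul_nonneg (hφnn j) (hspow j))
      (fun j => mul_le_of_le_one_right (hφnn j) (hspow1 j)) hφsum
  have hΦc : Summable (fun j : ℕ => φ (j + c) * s ^ (j + c - 1)) :=
    Summable.of_nonneg_of_le (fun j => mul_nonneg (hφnn _) (hspow _))
      (fun j => mul_le_of_le_one_right (hφnn _) (hspow1 _)) hφc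
  refine ⟨hΦ, hΦc, ?_⟩
  have hBs : Summable (fun j : ℕ => b j * s ^ j) := by
    refine Summable.of_norm_bounded (summable_abs_iff.2 hbsum) fun j => ?_
    rw [Real.norm_eq_abs, abs_mul]
    calc |b j| * |s ^ j| ≤ |b j| * 1 := by
          refine mul_le_mul_of_nonneg_left ?_ (abs_nonneg _)
          rw [abs_of_nonneg (hspow j)]; exact hspow1 j
      _ = |b j| := mul_one _
  have hβ2s : Summable (fun m : ℕ => b (m + 2) * s ^ (m + 2)) := (summable_nat_add_iff 2).2 hBs
  have hP : Summable (fun k : ℕ => φ (k + 1) * s ^ k) :=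
    Summable.of_nonneg_of_le (fun k => mul_nonneg (hφnn _) (hspow _))
      (fun k => mul_le_of_le_one_right (hφnn _) (hspow1 _)) hφ1
  set β2 : ℝ := ∑' m : ℕ, b (m + 2) * s ^ (m + 2) with hβ2def
  set P : ℝ := ∑' k : ℕ, φ (k + 1) * s ^ k with hPdef
  set Φ : ℝ := ∑' j : ℕ, φ j * s ^ j with hΦdef
  set Φc : ℝ := ∑' j : ℕ, φ (j + c) * s ^ (j + c - 1) with hΦcdef
  -- basic facts about min
  have hmin1 : ∀ k : ℕ, 1 ≤ min (k + 1) c := fun k => le_min (Nat.succ_le_succ (Nat.zero_le k)) hc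
  have hminc : ∀ k : ℕ, min (k + 1) c ≤ c := fun k => min_le_right _ _
  have hmin1R : ∀ k : ℕ, (1 : ℝ) ≤ ((min (k + 1) c : ℕ) : ℝ) := fun k => by
    exact_mod_cast hmin1 k
  have hmincR : ∀ k : ℕ, ((min (k + 1) c : ℕ) : ℝ) ≤ (c : ℝ) := fun k => by
    exact_mod_cast hminc k
  -- the basic functions
  set d : ℕ → ℝ :=
    fun k => (b 1 - (((min (k + 1) c : ℕ) : ℝ) - 1) * b 0) * φ (k + 1) * s ^ (k + 1) with hddef
  set u : ℕ → ℝ :=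
    fun j => ((min (j + 1) c : ℕ) : ℝ) * b 0 * φ (j + 1) * s ^ j with hudef
  set a : ℕ → ℝ := fun k => φ (k + 1) * s ^ k * β2 with hadef
  set A : ℕ → ℝ :=
    fun j => (∑ k ∈ Finset.Icc 1 (j - 1), b (j - k + 1) * φ k) * s ^ j with hAdef
  set d' : ℕ → ℝ := fun j => if j = 0 then (0 : ℝ) else d (j - 1) with hd'def
  set r : ℕ → ℝ := fun k => s ^ k * Bi b (min (k + 1) c) s * φ (k + 1) with hrdef
  set δf : ℕ → ℝ := fun j => -(if i = j then (1 : ℝ) else 0) * s ^ j with hδfdef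
  -- summability of the pieces
  have hds : Summable (fun k : ℕ => φ (k + 1) * s ^ (k + 1)) :=
    Summable.of_nonneg_of_le (fun k => mul_nonneg (hφnn _) (hspow _))
      (fun k => mul_le_of_le_one_right (hφnn _) (hspow1 _)) hφ1
  have he2 : Summable (fun k : ℕ =>
      (((min (k + 1) c : ℕ) : ℝ) - 1) * b 0 * (φ (k + 1) * s ^ (k + 1))) := by
    refine Summable.of_nonneg_of_le ?_ ?_ (hφ1.mul_left ((c : ℝ) * b 0))
    · intro k
      exact mul_nonneg (mul_nonneg (by linarith [hmin1R k]) hb0.le)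
        (mul_nonneg (hφnn _) (hspow _))
    · intro k
      calc (((min (k + 1) c : ℕ) : ℝ) - 1) * b 0 * (φ (k + 1) * s ^ (k + 1))
          ≤ (((min (k + 1) c : ℕ) : ℝ) - 1) * b 0 * φ (k + 1) :=
            mul_le_mul_of_nonneg_left (mul_le_of_le_one_right (hφnn _) (hspow1 _))
              (mul_nonneg (by linarith [hmin1R k]) hb0.le)
        _ ≤ (c : ℝ) * b 0 * φ (k + 1) := by
            refine mul_le_mul_of_nonneg_right (mul_le_mul_of_nonneg_right ?_ hb0.le) (hφnn _)
            linarith [hmincR k]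
  have hdsum : Summable d := by
    have hde : d = fun k => b 1 * (φ (k + 1) * s ^ (k + 1)) -
        (((min (k + 1) c : ℕ) : ℝ) - 1) * b 0 * (φ (k + 1) * s ^ (k + 1)) := by
      funext k; simp only [hddef]; ring
    rw [hde]
    exact (hds.mul_left (b 1)).sub he2
  have husum : Summable u := by
    refine Summable.of_nonneg_of_le ?_ ?_ (hφ1.mul_left ((c : ℝ) * b 0))
    · intro j
      simp only [hudef]
      exact mul_nonneg (mul_nonneg (mul_nonneg (Nat.cast_nonneg _) hb0.le) (hφnn _)) (hspow _)
    · intro j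
      simp only [hudef]
      calc ((min (j + 1) c : ℕ) : ℝ) * b 0 * φ (j + 1) * s ^ j
          ≤ ((min (j + 1) c : ℕ) : ℝ) * b 0 * φ (j + 1) :=
            mul_le_of_le_one_right
              (mul_nonneg (mul_nonneg (Nat.cast_nonneg _) hb0.le) (hφnn _)) (hspow1 _)
        _ ≤ (c : ℝ) * b 0 * φ (j + 1) :=
            mul_le_mul_of_nonneg_right
              (mul_le_mul_of_nonneg_right (hmincR j) hb0.le) (hφnn _)
  have hasum : Summable a := hP.mul_right β2
  have hδeq : δf = fun j => if j = i then -(s ^ i) else 0 := by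
    funext j
    simp only [hδfdef]
    by_cases h : j = i
    · subst h; simp
    · rw [if_neg (fun heq => h heq.symm), if_neg h]; ring
  have hδsum : Summable δf := by
    rw [hδeq]; exact (hasSum_ite_eq i (-(s ^ i))).summable
  have htsumδ : (∑' j : ℕ, δf j) = -(s ^ i) := by
    rw [hδeq]; exact (hasSum_ite_eq i (-(s ^ i))).tsum_eq
  have hd'shift : ∀ n : ℕ, d' (n + 1) = d n := by
    intro n; simp only [hd'def, Nat.succ_ne_zero, if_false, Nat.add_sub_cancel]
  have hd'sum : Summable d' := by
    refine (summable_nat_add_iff 1).1 ?_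
    rw [show (fun n : ℕ => d' (n + 1)) = d from funext hd'shift]
    exact hdsum
  have htsumd' : (∑' j : ℕ, d' j) = ∑' k : ℕ, d k := by
    rw [Summable.tsum_eq_zero_add hd'sum, show (fun n : ℕ => d' (n + 1)) = d from funext hd'shift]
    simp only [hd'def, if_pos rfl, zero_add]
  -- the key pointwise identity coming from the resolvent equations
  have hkey : ∀ j : ℕ, -(lam * (φ j * s ^ j)) + A j + d' j + u j = δf j := by
    intro j
    rcases Nat.eq_zero_or_pos j with hj0 | hj1
    · subst hj0
      simp only [hAdef, hd'def, hudef, hδfdef, if_pos rfl]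
      rw [show Finset.Icc 1 0 = (∅ : Finset ℕ) from Finset.Icc_eq_empty (by omega)]
      rw [show min (0 + 1) c = 1 from min_eq_left hc]
      simp only [Finset.sum_empty, pow_zero, Nat.cast_one]
      linear_combination heq0
    · have hj1' : j - 1 + 1 = j := by omega
      by_cases hjc : j ≤ c - 1
      · have H := heqmid j hj1 hjc
        simp only [hAdef, hd'def, hddef, hudef, hδfdef, if_neg (by omega : ¬ j = 0)]
        rw [hj1', show min j c = j from min_eq_left (by omega),
          show min (j + 1) c = j + 1 from min_eq_left (by omega)]
        push_cast
        linear_combination s ^ j * H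
      · have H := heqtail j (by omega)
        simp only [hAdef, hd'def, hddef, hudef, hδfdef, if_neg (by omega : ¬ j = 0)]
        rw [hj1', show min j c = c from min_eq_right (by omega),
          show min (j + 1) c = c from min_eq_right (by omega)]
        linear_combination s ^ j * H
  have hAeq : A = fun j => δf j + lam * (φ j * s ^ j) - d' j - u j := by
    funext j
    have := hkey j
    linarith
  have hAΦ : Summable (fun j : ℕ => lam * (φ j * s ^ j)) := hΦ.mul_left lam
  have htsumA : (∑' j : ℕ, A j) =
      -(s ^ i) + lam * Φ - (∑' k : ℕ, d k) - (∑' j : ℕ, u j) := by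
    rw [hAeq, Summable.tsum_sub ((hδsum.add hAΦ).sub hd'sum) husum, Summable.tsum_sub (hδsum.add hAΦ) hd'sum,
      Summable.tsum_add hδsum hAΦ, htsumδ, tsum_mul_left, ← hΦdef, htsumd']
  -- the double sum: ∑' j, A j = β2 * P
  set F : ℕ × ℕ → ℝ :=
    fun p => b (p.1 + 2) * s ^ (p.1 + 2) * (φ (p.2 + 1) * s ^ p.2) with hFdef
  have hFsum : Summable F := by
    refine Summable.mul_of_nonneg hβ2s hP ?_ ?_
    · intro m; exact mul_nonneg (hbnn _ (by omega)) (hspow _)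
    · intro k; exact mul_nonneg (hφnn _) (hspow _)
  have hFfiber : ∀ m : ℕ, Summable (fun k : ℕ => F (m, k)) := by
    intro m
    simp only [hFdef]
    exact hP.mul_left _
  have hFtsum : (∑' p : ℕ × ℕ, F p) = β2 * P := by
    rw [Summable.tsum_prod' hFsum hFfiber]
    simp only [hFdef]
    simp_rw [tsum_mul_left, tsum_mul_right]
    rfl
  set en : ℕ × ℕ → ℕ × ℕ := fun p => (p.1 + p.2 + 2, p.2 + 1) with hendef
  have hen_inj : Function.Injective en := by
    intro p q h
    simp only [hendef, Prod.mk.injEq] at h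
    obtain ⟨h1, h2⟩ := h
    rw [Prod.ext_iff]
    constructor <;> omega
  set G : ℕ × ℕ → ℝ :=
    fun q => if 1 ≤ q.2 ∧ q.2 + 1 ≤ q.1 then b (q.1 - q.2 + 1) * φ q.2 * s ^ q.1 else 0
    with hGdef
  have hrange : ∀ q : ℕ × ℕ, q ∉ Set.range en → G q = 0 := by
    intro q hq
    simp only [hGdef]
    split_ifs with h
    · exfalso
      apply hq
      refine ⟨(q.1 - q.2 - 1, q.2 - 1), ?_⟩
      simp only [hendef, Prod.ext_iff, Prod.fst, Prod.snd]
      constructor <;> omega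
    · rfl
  have hGF : ∀ p : ℕ × ℕ, G (en p) = F p := by
    intro p
    simp only [hGdef, hendef, hFdef]
    rw [if_pos ⟨by omega, by omega⟩]
    rw [show p.1 + p.2 + 2 - (p.2 + 1) + 1 = p.1 + 2 from by omega,
      show p.1 + p.2 + 2 = (p.1 + 2) + p.2 from by omega, pow_add]
    ring
  have hGcomp : G ∘ en = F := funext hGF
  have hGsum : Summable G := by
    rw [← Function.Injective.summable_iff hen_inj hrange]
    exact hGcomp.symm ▸ hFsum
  have hGtsum : (∑' q : ℕ × ℕ, G q) = β2 * P := by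
    rw [← Function.Injective.tsum_eq hen_inj (Function.support_subset_iff'.2 hrange)]
    rw [tsum_congr hGF]
    exact hFtsum
  have hGfiber : ∀ j : ℕ, Summable (fun k : ℕ => G (j, k)) := by
    intro j
    refine summable_of_ne_finset_zero (s := Finset.Icc 1 (j - 1)) ?_
    intro k hk
    rw [Finset.mem_Icc] at hk
    simp only [hGdef]
    exact if_neg (by omega)
  have hGA : ∀ j : ℕ, (∑' k : ℕ, G (j, k)) = A j := by
    intro j
    have hvanish : ∀ k ∉ Finset.Icc 1 (j - 1), G (j, k) = 0 := by
      intro k hk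
      rw [Finset.mem_Icc] at hk
      simp only [hGdef]
      exact if_neg (by omega)
    rw [tsum_eq_sum hvanish]
    simp only [hAdef]
    rw [Finset.sum_mul]
    refine Finset.sum_congr rfl fun k hk => ?_
    rw [Finset.mem_Icc] at hk
    simp only [hGdef]
    rw [if_pos ⟨hk.1, by omega⟩]
  have htsumA2 : (∑' j : ℕ, A j) = β2 * P :=
    calc (∑' j : ℕ, A j) = ∑' j : ℕ, ∑' k : ℕ, G (j, k) := (tsum_congr hGA).symm
      _ = ∑' q : ℕ × ℕ, G q := (Summable.tsum_prod' hGsum hGfiber).symm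
      _ = β2 * P := hGtsum
  have hmain : β2 * P = -(s ^ i) + lam * Φ - (∑' k : ℕ, d k) - (∑' j : ℕ, u j) := by
    rw [← htsumA2]; exact htsumA
  -- evaluation of Bi
  have hBival : ∀ m : ℕ, Bi b m s =
      β2 + b 1 * s + (m : ℝ) * b 0 - ((m : ℝ) - 1) * b 0 * s := by
    intro m
    have h2 := Summable.sum_add_tsum_nat_add (f := fun j : ℕ => b j * s ^ j) 2 hBs
    unfold Bi
    rw [← h2]
    simp only [Finset.sum_range_succ, Finset.sum_range_zero, pow_zero, pow_one, ← hβ2def]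
    ring
  have hr_eq : ∀ k : ℕ, r k = a k + d k + u k := by
    intro k
    simp only [hrdef, hadef, hddef, hudef]
    rw [hBival (min (k + 1) c)]
    ring
  have hrsum : Summable r := by
    rw [show r = fun k => a k + d k + u k from funext hr_eq]
    exact (hasum.add hdsum).add husum
  have htsumr : (∑' k : ℕ, r k) = P * β2 + (∑' k : ℕ, d k) + (∑' j : ℕ, u j) := by
    rw [show r = fun k => a k + d k + u k from funext hr_eq,
      Summable.tsum_add (hasum.add hdsum) husum, Summable.tsum_add hasum hdsum]
    simp only [hadef]
    rw [tsum_mul_right, ← hPdef]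
  have hsplit := Summable.sum_add_tsum_nat_add (f := r) (c - 1) hrsum
  have hfirst : (∑ k ∈ Finset.range (c - 1), r k) =
      ∑ k ∈ Finset.Icc 1 (c - 1), s ^ (k - 1) * Bi b k s * φ k := by
    rw [show Finset.Icc 1 (c - 1) = Finset.Ico 1 c from by
      ext x; simp only [Finset.mem_Icc, Finset.mem_Ico]; omega]
    rw [Finset.sum_Ico_eq_sum_range]
    refine Finset.sum_congr rfl fun k hk => ?_
    rw [Finset.mem_range] at hk
    simp only [hrdef]
    rw [show min (k + 1) c = k + 1 from min_eq_left (by omega),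
      show 1 + k - 1 = k from by omega, show 1 + k = k + 1 from by omega]
  have hsecond : (∑' k : ℕ, r (k + (c - 1))) = Bi b c s * Φc := by
    have hpt : ∀ k : ℕ, r (k + (c - 1)) = Bi b c s * (φ (k + c) * s ^ (k + c - 1)) := by
      intro k
      simp only [hrdef]
      rw [show k + (c - 1) + 1 = k + c from by omega,
        show min (k + c) c = c from min_eq_right (by omega),
        show k + (c - 1) = k + c - 1 from by omega]
      ring
    rw [tsum_congr hpt, tsum_mul_left, ← hΦcdef]
  have hcomm : P * β2 = β2 * P := mul_comm _ _
  linarith [hmain, hsplit, hfirst, hsecond, htsumr, hcomm]
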